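/- Let ν > 0 be real, set D = Γ((ν+1)/2)/(√(νπ)·Γ(ν/2)), a = n = (ν + 3)/(ν + 1), and b = ((ν + 1)/ν)·D^(−2/(ν+1)) (real powers). Then the Student's t distribution density φ(η) = D·(1 + η²/ν)^(−(ν+1)/2) satisfies φ·φ'' − a(φ')² + b·φ^(n+1) = 0 for all η ∈ ℝ, where all powers are real powers of positive reals and Γ is the Gamma function. -/

import Mathlib

/-- the Student's t density solves the soliton ODE with
`a = n = (ν+3)/(ν+1)` and `b = ((ν+1)/ν) D^(−2/(ν+1))`. -/
theorem stmt_11 (ν : ℝ) (hν : 0 < ν)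
    (D : ℝ) (hD : D = Real.Gamma ((ν + 1) / 2) / (Real.sqrt (ν * Real.pi) * Real.Gamma (ν / 2)))
    (a n : ℝ) (ha : a = (ν + 3) / (ν + 1)) (hn : n = (ν + 3) / (ν + 1))
    (b : ℝ) (hb : b = ((ν + 1) / ν) * D ^ (-2 / (ν + 1))) :
    ∀ η : ℝ,
      (fun η => D * (1 + η ^ 2 / ν) ^ (-(ν + 1) / 2)) η
          * deriv (deriv (fun η => D * (1 + η ^ 2 / ν) ^ (-(ν + 1) / 2))) η
        - a * (deriv (fun η => D * (1 + η ^ 2 / ν) ^ (-(ν + 1) / 2)) η) ^ 2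
        + b * ((fun η => D * (1 + η ^ 2 / ν) ^ (-(ν + 1) / 2)) η) ^ (n + 1) = 0 := by
  intro η
  set p : ℝ := -(ν + 1) / 2 with hp
  -- positivity facts
  have hD0 : 0 < D := by
    rw [hD]
    have h1 : 0 < Real.Gamma ((ν + 1) / 2) := Real.Gamma_pos_of_pos (by linarith)
    have h2 : 0 < Real.Gamma (ν / 2) := Real.Gamma_pos_of_pos (by linarith)
    have h3 : 0 < Real.sqrt (ν * Real.pi) := Real.sqrt_pos.mpr (by positivity)
    positivity
  have hu : ∀ x : ℝ, (0:ℝ) < 1 + x ^ 2 / ν := fun x => by positivity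
  have hν1 : ν + 1 ≠ 0 := by linarith
  -- base derivative lemma
  have hbase : ∀ (q : ℝ) (x : ℝ),
      HasDerivAt (fun y : ℝ => (1 + y ^ 2 / ν) ^ q)
        (q * (1 + x ^ 2 / ν) ^ (q - 1) * (2 * x / ν)) x := by
    intro q x
    have h1 : HasDerivAt (fun y : ℝ => 1 + y ^ 2 / ν) (2 * x / ν) x := by
      have := ((hasDerivAt_pow 2 x).div_const ν).const_add 1
      simpa using this
    have h2 : HasDerivAt (fun y : ℝ => y ^ q)
        (q * (1 + x ^ 2 / ν) ^ (q - 1)) (1 + x ^ 2 / ν) :=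
      Real.hasDerivAt_rpow_const (Or.inl (hu x).ne')
    exact h2.comp x h1
  -- first derivative as a function
  have hd1 : deriv (fun η => D * (1 + η ^ 2 / ν) ^ p)
      = fun x => D * (p * (1 + x ^ 2 / ν) ^ (p - 1) * (2 * x / ν)) := by
    funext x
    exact (((hbase p x).const_mul D).deriv)
  -- second derivative at η
  have hd2 : deriv (deriv (fun η => D * (1 + η ^ 2 / ν) ^ p)) η
      = D * (p * ((p - 1) * (1 + η ^ 2 / ν) ^ (p - 2) * (2 * η / ν) * (2 * η / ν)
          + (1 + η ^ 2 / ν) ^ (p - 1) * (2 / ν))) := by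
    rw [hd1]
    have hw := hbase (p - 1) η
    have hlin : HasDerivAt (fun x : ℝ => 2 * x / ν) (2 / ν) η := by
      simpa using ((hasDerivAt_id η).const_mul 2).div_const ν
    have hmul := hw.mul hlin
    have h := (hmul.const_mul p).const_mul D
    have h2 : HasDerivAt (fun x => D * (p * (1 + x ^ 2 / ν) ^ (p - 1) * (2 * x / ν)))
        (D * (p * ((p - 1) * (1 + η ^ 2 / ν) ^ (p - 2) * (2 * η / ν) * (2 * η / ν)
          + (1 + η ^ 2 / ν) ^ (p - 1) * (2 / ν)))) η := by
      convert h using 2 <;> first | rfl | ring1 | (simp only [Pi.mul_apply]; ring1) | (rw [show p - 1 - 1 = p - 2 by ring])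
    exact h2.deriv
  have hd1' : deriv (fun η => D * (1 + η ^ 2 / ν) ^ p) η
      = D * (p * (1 + η ^ 2 / ν) ^ (p - 1) * (2 * η / ν)) :=
    ((hbase p η).const_mul D).deriv
  simp only
  rw [hd2, hd1']
  set u : ℝ := 1 + η ^ 2 / ν with hudef
  have hu0 : (0:ℝ) < u := hu η
  -- rpow rewrites
  have e1 : u ^ (p - 1) = u ^ p / u := by
    rw [Real.rpow_sub hu0, Real.rpow_one]
  have e2 : u ^ (p - 2) = u ^ p / (u * u) := by
    rw [show p - 2 = p - 1 - 1 by ring, Real.rpow_sub hu0, Real.rpow_sub hu0,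
      Real.rpow_one, div_div]
  have e3 : (D * u ^ p) ^ (n + 1) = D ^ (n + 1) * u ^ (p * (n + 1)) := by
    rw [Real.mul_rpow hD0.le (Real.rpow_nonneg hu0.le _), Real.rpow_mul hu0.le]
  have e4 : p * (n + 1) = p + p - 1 := by
    rw [hn, hp]; field_simp; ring
  have e5 : u ^ (p + p - 1) = u ^ p * u ^ p / u := by
    rw [Real.rpow_sub hu0, Real.rpow_add hu0, Real.rpow_one]
  have e6 : b * D ^ (n + 1) = ((ν + 1) / ν) * (D * D) := by
    rw [hb, hn, mul_assoc, ← Real.rpow_add hD0,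
      show -2 / (ν + 1) + ((ν + 3) / (ν + 1) + 1) = 2 by field_simp; ring,
      show (2:ℝ) = ((2:ℕ):ℝ) by norm_num, Real.rpow_natCast]
    ring
  rw [e3, e4, e5, e1, e2, ha, hp]
  rw [show b * (D ^ (n+1) * (u ^ (-(ν+1)/2) * u ^ (-(ν+1)/2) / u))
      = (b * D ^ (n+1)) * (u ^ (-(ν+1)/2) * u ^ (-(ν+1)/2) / u) by ring, e6]
  have hune : u ≠ 0 := hu0.ne'
  clear_value u
  set A := u ^ (-(ν+1)/2) with hA
  clear_value A
  field_simp
  ring
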